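/- Let N and 𝒩 be positive integers. Let K, L, C, M be N×N complex matrices and r, s be N×𝒩 complex matrices such that K is invertible, C + M is invertible, K·M − M·L = r·sᵀ, and K·C = C·L. Then det(I_𝒩 − sᵀ·(C+M)⁻¹·K⁻¹·r) = det L / det K. In particular, if K = L then this determinant equals 1. -/

import Mathlib

open Matrix

theorem stmt_3 (N Nc : ℕ) (hN : 0 < N) (hNc : 0 < Nc)
    (K L C M : Matrix (Fin N) (Fin N) ℂ)
    (r s : Matrix (Fin N) (Fin Nc) ℂ)
    (hK : IsUnit K.det) (hCM : IsUnit (C + M).det)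
    (hSyl : K * M - M * L = r * sᵀ)
    (hKC : K * C = C * L) :
    ((1 : Matrix (Fin Nc) (Fin Nc) ℂ) - sᵀ * (C + M)⁻¹ * K⁻¹ * r).det = L.det / K.det
    ∧ (K = L →
        ((1 : Matrix (Fin Nc) (Fin Nc) ℂ) - sᵀ * (C + M)⁻¹ * K⁻¹ * r).det = 1) := by
  have hKne : K.det ≠ 0 := hK.ne_zero
  have hCMne : (C + M).det ≠ 0 := hCM.ne_zero
  have h1 : K * (C + M) - r * sᵀ = (C + M) * L := by
    rw [← hSyl, mul_add, add_mul, hKC]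
    noncomm_ring
  have hKinv : K * K⁻¹ = 1 := mul_nonsing_inv K hK
  have hCMinv : (C + M) * (C + M)⁻¹ = 1 := mul_nonsing_inv _ hCM
  have key : (1 : Matrix (Fin N) (Fin N) ℂ) - r * (sᵀ * (C + M)⁻¹ * K⁻¹)
      = (C + M) * L * ((C + M)⁻¹ * K⁻¹) := by
    have := congrArg (· * ((C + M)⁻¹ * K⁻¹)) h1
    simp only [sub_mul] at this
    calc (1 : Matrix (Fin N) (Fin N) ℂ) - r * (sᵀ * (C + M)⁻¹ * K⁻¹)
        = K * (C + M) * ((C + M)⁻¹ * K⁻¹) - r * sᵀ * ((C + M)⁻¹ * K⁻¹) := by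
          rw [show K * (C + M) * ((C + M)⁻¹ * K⁻¹) = K * ((C + M) * (C + M)⁻¹) * K⁻¹ by
            noncomm_ring, hCMinv, mul_one, hKinv]
          simp [Matrix.mul_assoc]
      _ = (C + M) * L * ((C + M)⁻¹ * K⁻¹) := this
  have hmain : ((1 : Matrix (Fin Nc) (Fin Nc) ℂ) - sᵀ * (C + M)⁻¹ * K⁻¹ * r).det
      = L.det / K.det := by
    rw [det_one_sub_mul_comm, key]
    rw [det_mul, det_mul, det_mul, det_nonsing_inv, det_nonsing_inv]
    simp only [Ring.inverse_eq_inv']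
    field_simp
  exact ⟨hmain, fun h => by rw [hmain, h, div_self (h ▸ hKne)]⟩
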